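/- Let p > 2, r ≥ p−1, b > 0, q̄ > 0 and C₁ > 0. Let δ₀ be as in the perturbed-kernel estimate for p > 2, let N ≥ 2 be an integer, δ ∈ (0, δ₀), and ε ∈ (0,1). Suppose w = (u,v) : B² → ℝ² is Lipschitz and that, up to a Lebesgue-null set, B² is the disjoint union of measurable sets Ω_E indexed by E in the family S := {B_i, −B_i, C_i, −C_i : 2 ≤ i ≤ N} ∪ {A_N, −A_N}, such that for a.e. x ∈ Ω_E the Jacobian matrix Dw(x) satisfies |Dw(x) − E| < δ, and such that |Ω_{A_N}| + |Ω_{−A_N}| ≤ C₁ N^{−q̄}. Then there is a constant C (depending only on p, r, b, C₁, and not on N, δ, ε) such that ∫_{B²} | |∇u(x)|^{p−2}∇u(x) − ∇⊥v(x) |^{r/(p−1)} dx ≤ C [ ∑_{E ∈ S, E ≠ ±A_N} ( δ^r ε^{−r(p−2)/(p−1)} |Ω_E| + ε^{r/(p−1)} ∫_{Ω_E} |∇u(x)|^r dx ) + N^{r−q̄} ]. -/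

import Mathlib

open MeasureTheory Real

attribute [local instance] Matrix.normedAddCommGroup

/-- `A_i = diag(b·i, i^{p−1})`. -/
noncomputable def Amat (p b : ℝ) (i : ℕ) : Matrix (Fin 2) (Fin 2) ℝ :=
  !![b * i, 0; 0, (i : ℝ) ^ (p - 1)]

/-- `B_i = diag(b(i−1), −b^{p−1}(i−1)^{p−1})`. -/
noncomputable def Bmat (p b : ℝ) (i : ℕ) : Matrix (Fin 2) (Fin 2) ℝ :=
  !![b * ((i : ℝ) - 1), 0; 0, -(b ^ (p - 1) * ((i : ℝ) - 1) ^ (p - 1))]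

/-- `C_i = diag(−i, i^{p−1})`. -/
noncomputable def Cmat (p b : ℝ) (i : ℕ) : Matrix (Fin 2) (Fin 2) ℝ :=
  !![-(i : ℝ), 0; 0, (i : ℝ) ^ (p - 1)]

/-- The vector `(x, y)` as an element of Euclidean `ℝ²`. -/
noncomputable def vec2 (x y : ℝ) : EuclideanSpace ℝ (Fin 2) :=
  (WithLp.equiv 2 (Fin 2 → ℝ)).symm ![x, y]

/-- The rotated gradient `∇⊥v = (-∂₂ v, ∂₁ v)` applied to a gradient vector `g`. -/
noncomputable def perp (g : EuclideanSpace ℝ (Fin 2)) : EuclideanSpace ℝ (Fin 2) :=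
  vec2 (-(g 1)) (g 0)

/-- The a.e.-defined Jacobian matrix of `w = (u,v) : B² → ℝ²`. -/
noncomputable def Dw (u v : EuclideanSpace ℝ (Fin 2) → ℝ) (x : EuclideanSpace ℝ (Fin 2)) :
    Matrix (Fin 2) (Fin 2) ℝ :=
  !![gradient u x 0, gradient u x 1; gradient v x 0, gradient v x 1]

/-! ### auxiliary lemmas -/

lemma IUB.vec2_eta (g : EuclideanSpace ℝ (Fin 2)) : vec2 (g 0) (g 1) = g := by
  ext i; fin_cases i <;> rfl

lemma IUB.norm_vec2 (a c : ℝ) : ‖vec2 a c‖ = Real.sqrt (a^2 + c^2) := by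
  rw [EuclideanSpace.norm_eq]
  simp [vec2, Fin.sum_univ_two, sq_abs]

lemma IUB.norm_vec2_le (a c : ℝ) : ‖vec2 a c‖ ≤ |a| + |c| := by
  rw [IUB.norm_vec2]
  have h : a^2 + c^2 ≤ (|a| + |c|)^2 := by
    nlinarith [abs_nonneg a, abs_nonneg c, sq_abs a, sq_abs c]
  calc Real.sqrt (a^2+c^2) ≤ Real.sqrt ((|a|+|c|)^2) := Real.sqrt_le_sqrt h
    _ = |a|+|c| := Real.sqrt_sq (by positivity)

lemma IUB.norm_perp (g : EuclideanSpace ℝ (Fin 2)) : ‖perp g‖ = ‖g‖ := by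
  have h : g = vec2 (g 0) (g 1) := (IUB.vec2_eta g).symm
  rw [perp, IUB.norm_vec2]
  conv_rhs => rw [h, IUB.norm_vec2]
  ring_nf

lemma IUB.perp_sub (g h : EuclideanSpace ℝ (Fin 2)) : perp g - perp h = perp (g - h) := by
  ext i; fin_cases i <;> simp [perp, vec2] <;> ring

lemma IUB.continuous_perp : Continuous perp := by
  have h : Isometry perp := Isometry.of_dist_eq (fun a b => by
    rw [dist_eq_norm, dist_eq_norm, IUB.perp_sub, IUB.norm_perp])
  exact h.continuous

lemma IUB.rpow_p_sub_two_mul_self {p : ℝ} (hp : 2 < p) (t : ℝ) (ht : 0 ≤ t) :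
    t ^ (p-2) * t = t ^ (p-1) := by
  rcases eq_or_lt_of_le ht with h0 | h0
  · rw [← h0, Real.zero_rpow (by linarith), Real.zero_rpow (by linarith), zero_mul]
  · calc t ^ (p-2) * t = t ^ (p-2) * t ^ (1:ℝ) := by rw [Real.rpow_one]
      _ = t ^ (p-2+1) := (Real.rpow_add h0 _ _).symm
      _ = t ^ (p-1) := by ring_nf

lemma IUB.norm_rpow_smul {p : ℝ} (hp : 2 < p) (g : EuclideanSpace ℝ (Fin 2)) :
    ‖(‖g‖ ^ (p-2)) • g‖ = ‖g‖ ^ (p-1) := by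
  rw [norm_smul, Real.norm_eq_abs, abs_of_nonneg (Real.rpow_nonneg (norm_nonneg g) _),
    IUB.rpow_p_sub_two_mul_self hp _ (norm_nonneg g)]

lemma IUB.young_bound {p r δ ε X : ℝ} (hp : 2 < p) (hr : p - 1 ≤ r) (hδ : 0 ≤ δ)
    (hε : 0 < ε) (hX : 0 ≤ X) :
    (δ * X ^ (p-2)) ^ (r/(p-1)) ≤
      δ ^ r * ε ^ (-(r*(p-2)/(p-1))) + ε ^ (r/(p-1)) * X ^ r := by
  have hp1 : (0:ℝ) < p - 1 := by linarith
  have hp2 : (0:ℝ) < p - 2 := by linarith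
  have hr0 : (0:ℝ) < r := by linarith
  set κ := r / (p-1) with hκdef
  have hκ : 0 < κ := div_pos hr0 hp1
  have hκp1 : κ * (p-1) = r := div_mul_cancel₀ r hp1.ne'
  set s := δ * ε ^ (-((p-2)/(p-1))) with hs
  set t := ε ^ ((1:ℝ)/(p-1)) * X with ht
  have hs0 : 0 ≤ s := mul_nonneg hδ (Real.rpow_nonneg hε.le _)
  have ht0 : 0 ≤ t := mul_nonneg (Real.rpow_nonneg hε.le _) hX
  have hee : ε ^ (-((p-2)/(p-1))) * ε ^ ((1:ℝ)/(p-1)*(p-2)) = 1 := by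
    rw [← Real.rpow_add hε]
    have h0 : -((p-2)/(p-1)) + (1:ℝ)/(p-1)*(p-2) = 0 := by field_simp; ring
    rw [h0, Real.rpow_zero]
  have h1 : δ * X ^ (p-2) = s * t ^ (p-2) := by
    rw [ht, Real.mul_rpow (Real.rpow_nonneg hε.le _) hX, ← Real.rpow_mul hε.le, hs]
    rw [show δ * ε ^ (-((p-2)/(p-1))) * (ε ^ ((1:ℝ)/(p-1)*(p-2)) * X ^ (p-2)) =
      (ε ^ (-((p-2)/(p-1))) * ε ^ ((1:ℝ)/(p-1)*(p-2))) * (δ * X^(p-2)) from by ring, hee,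
      one_mul]
  have h2 : (δ * X ^ (p-2)) ^ κ = s ^ κ * t ^ ((p-2)*κ) := by
    rw [h1, Real.mul_rpow hs0 (Real.rpow_nonneg ht0 _), Real.rpow_mul ht0]
  have hconj : (p-1).HolderConjugate ((p-1)/(p-2)) :=
    (Real.holderConjugate_iff_eq_conjExponent (by linarith)).2 (by ring)
  have hy := Real.young_inequality_of_nonneg (Real.rpow_nonneg hs0 κ)
    (Real.rpow_nonneg ht0 ((p-2)*κ)) hconj
  have h3 : (s ^ κ) ^ (p-1) = δ ^ r * ε ^ (-(r*(p-2)/(p-1))) := by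
    rw [← Real.rpow_mul hs0, hκp1, hs, Real.mul_rpow hδ (Real.rpow_nonneg hε.le _),
      ← Real.rpow_mul hε.le]
    congr 1
    ring
  have h4 : (t ^ ((p-2)*κ)) ^ ((p-1)/(p-2)) = ε ^ κ * X ^ r := by
    rw [← Real.rpow_mul ht0]
    have he : (p-2)*κ * ((p-1)/(p-2)) = r := by
      rw [mul_div_assoc', mul_assoc, mul_div_cancel_left₀ _ hp2.ne', hκp1]
    rw [he, ht, Real.mul_rpow (Real.rpow_nonneg hε.le _) hX, ← Real.rpow_mul hε.le]
    congr 2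
    rw [hκdef]; ring
  have hd1 : (s ^ κ) ^ (p-1) / (p-1) ≤ (s ^ κ) ^ (p-1) :=
    div_le_self (Real.rpow_nonneg (Real.rpow_nonneg hs0 _) _) (by linarith)
  have hd2 : (t ^ ((p-2)*κ)) ^ ((p-1)/(p-2)) / ((p-1)/(p-2))
      ≤ (t ^ ((p-2)*κ)) ^ ((p-1)/(p-2)) :=
    div_le_self (Real.rpow_nonneg (Real.rpow_nonneg ht0 _) _)
      ((one_le_div hp2).mpr (by linarith))
  calc (δ * X ^ (p-2)) ^ κ = s ^ κ * t ^ ((p-2)*κ) := h2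
    _ ≤ (s ^ κ) ^ (p-1) + (t ^ ((p-2)*κ)) ^ ((p-1)/(p-2)) := by linarith
    _ = δ ^ r * ε ^ (-(r*(p-2)/(p-1))) + ε ^ κ * X ^ r := by rw [h3, h4]

lemma IUB.matrix_ne_of_entry {M M' : Matrix (Fin 2) (Fin 2) ℝ} (i j : Fin 2)
    (h : M i j ≠ M' i j) : M ≠ M' := fun he => h (by rw [he])

lemma IUB.Amat_notin {p b : ℝ} (hb : 0 < b) {N i : ℕ} (hN : 2 ≤ N) (hi : 2 ≤ i)
    (hBp : (0:ℝ) < b ^ (p-1) * ((i:ℝ)-1) ^ (p-1)) (hNp : (0:ℝ) < (N:ℝ) ^ (p-1))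
    (hip : (0:ℝ) < (i:ℝ) ^ (p-1)) :
    Amat p b N ≠ Bmat p b i ∧ Amat p b N ≠ -Bmat p b i ∧
    Amat p b N ≠ Cmat p b i ∧ Amat p b N ≠ -Cmat p b i := by
  have hN0 : (0:ℝ) < N := by exact_mod_cast Nat.lt_of_lt_of_le two_pos hN
  have hi1 : (1:ℝ) ≤ (i:ℝ) - 1 := by
    have : (2:ℝ) ≤ i := by exact_mod_cast hi
    linarith
  have hbN : (0:ℝ) < b * N := mul_pos hb hN0
  have hbi : (0:ℝ) < b * ((i:ℝ)-1) := mul_pos hb (by linarith)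
  refine ⟨IUB.matrix_ne_of_entry 1 1 ?_, IUB.matrix_ne_of_entry 0 0 ?_,
    IUB.matrix_ne_of_entry 0 0 ?_, IUB.matrix_ne_of_entry 1 1 ?_⟩ <;>
    simp only [Amat, Bmat, Cmat, Matrix.neg_apply, Matrix.cons_val', Matrix.cons_val_zero,
      Matrix.cons_val_one, Matrix.head_cons, Matrix.head_fin_const, Matrix.of_apply,
      Matrix.empty_val', Matrix.cons_val_fin_one, neg_neg] <;> intro h <;> nlinarith

lemma IUB.negAmat_notin {p b : ℝ} (hb : 0 < b) {N i : ℕ} (hN : 2 ≤ N) (hi : 2 ≤ i)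
    (hBp : (0:ℝ) < b ^ (p-1) * ((i:ℝ)-1) ^ (p-1)) (hNp : (0:ℝ) < (N:ℝ) ^ (p-1))
    (hip : (0:ℝ) < (i:ℝ) ^ (p-1)) :
    -Amat p b N ≠ Bmat p b i ∧ -Amat p b N ≠ -Bmat p b i ∧
    -Amat p b N ≠ Cmat p b i ∧ -Amat p b N ≠ -Cmat p b i := by
  have hN0 : (0:ℝ) < N := by exact_mod_cast Nat.lt_of_lt_of_le two_pos hN
  have hi1 : (1:ℝ) ≤ (i:ℝ) - 1 := by
    have : (2:ℝ) ≤ i := by exact_mod_cast hi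
    linarith
  have hbN : (0:ℝ) < b * N := mul_pos hb hN0
  have hbi : (0:ℝ) < b * ((i:ℝ)-1) := mul_pos hb (by linarith)
  refine ⟨IUB.matrix_ne_of_entry 0 0 ?_, IUB.matrix_ne_of_entry 1 1 ?_,
    IUB.matrix_ne_of_entry 1 1 ?_, IUB.matrix_ne_of_entry 0 0 ?_⟩ <;>
    simp only [Amat, Bmat, Cmat, Matrix.neg_apply, Matrix.cons_val', Matrix.cons_val_zero,
      Matrix.cons_val_one, Matrix.head_cons, Matrix.head_fin_const, Matrix.of_apply,
      Matrix.empty_val', Matrix.cons_val_fin_one, neg_neg] <;> intro h <;> nlinarith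

lemma IUB.Amat_ne_neg {p b : ℝ} (hb : 0 < b) {N : ℕ} (hN : 2 ≤ N) :
    Amat p b N ≠ -Amat p b N := by
  have hN0 : (0:ℝ) < N := by exact_mod_cast Nat.lt_of_lt_of_le two_pos hN
  have hbN : (0:ℝ) < b * N := mul_pos hb hN0
  refine IUB.matrix_ne_of_entry 0 0 ?_
  simp only [Amat, Matrix.neg_apply, Matrix.cons_val', Matrix.cons_val_zero,
    Matrix.empty_val', Matrix.cons_val_fin_one, Matrix.of_apply]
  intro h; nlinarith

lemma IUB.pointwise_A_bound {p b δ₀ : ℝ} (hp : 2 < p) (hb : 0 < b) (hδ₀ : 0 < δ₀) {N : ℕ}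
    (hN : 2 ≤ N) {δ : ℝ} (hδlt : δ < δ₀) {M E : Matrix (Fin 2) (Fin 2) ℝ}
    (h00 : |E 0 0| = b*N) (h01 : |E 0 1| = 0) (h10 : |E 1 0| = 0)
    (h11 : |E 1 1| = (N:ℝ)^(p-1)) (hM : ‖M - E‖ < δ) :
    ‖(‖vec2 (M 0 0) (M 0 1)‖ ^ (p - 2)) • vec2 (M 0 0) (M 0 1) - vec2 (-(M 1 1)) (M 1 0)‖
      ≤ ((b+2*δ₀)^(p-1) + 1 + 2*δ₀) * (N:ℝ)^(p-1) := by
  have hN1 : (1:ℝ) ≤ N := by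
    have : (2:ℝ) ≤ N := by exact_mod_cast hN
    linarith
  have hNp1 : (1:ℝ) ≤ (N:ℝ)^(p-1) := Real.one_le_rpow hN1 (by linarith)
  have hent : ∀ i j, |M i j - E i j| ≤ δ := by
    intro i j
    have h1 : ‖(M - E) i j‖ ≤ ‖M - E‖ := Matrix.norm_entry_le_entrywise_sup_norm (M - E)
    rw [Matrix.sub_apply, Real.norm_eq_abs] at h1
    linarith
  have habs : ∀ i j, |M i j| ≤ |E i j| + δ := by
    intro i j
    have h1 := abs_sub_abs_le_abs_sub (M i j) (E i j)
    have h2 := hent i j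
    linarith
  have hg : ‖vec2 (M 0 0) (M 0 1)‖ ≤ (b + 2*δ₀) * N := by
    have h1 := (habs 0 0).trans (by rw [h00])
    have h2 := (habs 0 1).trans (by rw [h01])
    have h3 := IUB.norm_vec2_le (M 0 0) (M 0 1)
    nlinarith [abs_nonneg (M 0 0), abs_nonneg (M 0 1)]
  have hgp : ‖vec2 (M 0 0) (M 0 1)‖ ^ (p-1) ≤ (b+2*δ₀)^(p-1) * (N:ℝ)^(p-1) := by
    calc ‖vec2 (M 0 0) (M 0 1)‖ ^ (p-1) ≤ ((b+2*δ₀) * N) ^ (p-1) :=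
          Real.rpow_le_rpow (norm_nonneg _) hg (by linarith)
      _ = (b+2*δ₀)^(p-1) * (N:ℝ)^(p-1) := Real.mul_rpow (by positivity) (by positivity)
  have hperp : ‖vec2 (-(M 1 1)) (M 1 0)‖ ≤ (1 + 2*δ₀) * (N:ℝ)^(p-1) := by
    have h1 := (habs 1 1).trans (by rw [h11])
    have h2 := (habs 1 0).trans (by rw [h10])
    have h3 := IUB.norm_vec2_le (-(M 1 1)) (M 1 0)
    rw [abs_neg] at h3
    nlinarith [abs_nonneg (M 1 1), abs_nonneg (M 1 0)]
  calc ‖(‖vec2 (M 0 0) (M 0 1)‖ ^ (p - 2)) • vec2 (M 0 0) (M 0 1) - vec2 (-(M 1 1)) (M 1 0)‖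
      ≤ ‖(‖vec2 (M 0 0) (M 0 1)‖ ^ (p - 2)) • vec2 (M 0 0) (M 0 1)‖
        + ‖vec2 (-(M 1 1)) (M 1 0)‖ := norm_sub_le _ _
    _ = ‖vec2 (M 0 0) (M 0 1)‖ ^ (p-1) + ‖vec2 (-(M 1 1)) (M 1 0)‖ := by
        rw [IUB.norm_rpow_smul hp]
    _ ≤ (b+2*δ₀)^(p-1) * (N:ℝ)^(p-1) + (1 + 2*δ₀) * (N:ℝ)^(p-1) := add_le_add hgp hperp
    _ = ((b+2*δ₀)^(p-1) + 1 + 2*δ₀) * (N:ℝ)^(p-1) := by ring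

set_option maxHeartbeats 2000000 in
open Classical in
/-- **Lemma (upper bound for the inhomogeneity, case `p > 2`).**
Given the perturbed-kernel estimate with constants `δ₀, C₀`, there is a constant `C`
(depending only on `p, r, b, C₁` but not on `N, δ, ε, w, Ω`) such that for any Lipschitz
`w = (u,v)` whose Jacobian decomposes `B²` (up to a null set) into pieces `Ω_E`,
`E ∈ S = {±B_i, ±C_i : 2 ≤ i ≤ N} ∪ {±A_N}`, on which `|Dw − E| < δ` a.e., with
`|Ω_{A_N}| + |Ω_{−A_N}| ≤ C₁ N^{−q̄}`, one has
`∫_{B²} ||∇u|^{p−2}∇u − ∇⊥v|^{r/(p−1)}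
  ≤ C [ ∑_{E ∈ S, E ≠ ±A_N} ( δ^r ε^{−r(p−2)/(p−1)} |Ω_E| + ε^{r/(p−1)} ∫_{Ω_E} |∇u|^r ) + N^{r−q̄} ]`. -/
theorem inhomogeneity_upper_bound (p r b qbar C₁ δ₀ C₀ : ℝ)
    (hp : 2 < p) (hr : p - 1 ≤ r) (hb : 0 < b) (hq : 0 < qbar) (hC₁ : 0 < C₁)
    (hδ₀ : 0 < δ₀) (hC₀ : 0 < C₀)
    (hkernel : ∀ δ : ℝ, 0 < δ → δ < δ₀ → ∀ i : ℕ, 2 ≤ i →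
      ∀ M E : Matrix (Fin 2) (Fin 2) ℝ,
        (E = Bmat p b i ∨ E = -Bmat p b i ∨ E = Cmat p b i ∨ E = -Cmat p b i) →
        ‖M - E‖ < δ →
        ‖(‖vec2 (M 0 0) (M 0 1)‖ ^ (p - 2)) • vec2 (M 0 0) (M 0 1)
            - vec2 (-(M 1 1)) (M 1 0)‖ ≤ C₀ * δ * ‖vec2 (M 0 0) (M 0 1)‖ ^ (p - 2)) :
    ∃ C : ℝ, 0 < C ∧
      ∀ (N : ℕ), 2 ≤ N → ∀ (δ ε : ℝ), 0 < δ → δ < δ₀ → 0 < ε → ε < 1 →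
      ∀ (u v : EuclideanSpace ℝ (Fin 2) → ℝ) (Ku Kv : NNReal),
        LipschitzWith Ku u → LipschitzWith Kv v →
      ∀ (Ω : Matrix (Fin 2) (Fin 2) ℝ → Set (EuclideanSpace ℝ (Fin 2))),
      -- the index family `S`
      (∀ S : Set (Matrix (Fin 2) (Fin 2) ℝ),
        S = {E | (∃ i : ℕ, 2 ≤ i ∧ i ≤ N ∧
              (E = Bmat p b i ∨ E = -Bmat p b i ∨ E = Cmat p b i ∨ E = -Cmat p b i)) ∨
            E = Amat p b N ∨ E = -Amat p b N} →
        -- the pieces are measurable subsets of the ball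
        (∀ E ∈ S, MeasurableSet (Ω E)) ∧
        (∀ E ∈ S, Ω E ⊆ Metric.ball (0 : EuclideanSpace ℝ (Fin 2)) 1) ∧
        -- pairwise disjoint
        (∀ E ∈ S, ∀ E' ∈ S, E ≠ E' → Ω E ∩ Ω E' = ∅) ∧
        -- they cover the ball up to a null set
        volume (Metric.ball (0 : EuclideanSpace ℝ (Fin 2)) 1 \ ⋃ E ∈ S, Ω E) = 0 ∧
        -- the Jacobian is `δ`-close to `E` a.e. on `Ω_E`
        (∀ E ∈ S, ∀ᵐ x ∂volume, x ∈ Ω E → ‖Dw u v x - E‖ < δ)) →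
      -- the `±A_N` pieces are small
      (volume (Ω (Amat p b N))).toReal + (volume (Ω (-Amat p b N))).toReal
        ≤ C₁ * (N : ℝ) ^ (-qbar) →
      (∫ x in Metric.ball (0 : EuclideanSpace ℝ (Fin 2)) 1,
          ‖(‖gradient u x‖ ^ (p - 2)) • gradient u x - perp (gradient v x)‖ ^ (r / (p - 1)))
        ≤ C * ((∑ E ∈ (Finset.Icc 2 N).biUnion
              (fun i => {Bmat p b i, -Bmat p b i, Cmat p b i, -Cmat p b i}),
              (δ ^ r * ε ^ (-(r * (p - 2) / (p - 1))) * (volume (Ω E)).toReal +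
                ε ^ (r / (p - 1)) * ∫ x in Ω E, ‖gradient u x‖ ^ r)) +
            (N : ℝ) ^ (r - qbar)) := by
  have hp1 : (0:ℝ) < p - 1 := by linarith
  have hp2 : (0:ℝ) < p - 2 := by linarith
  have hr0 : (0:ℝ) < r := by linarith
  have hκ : 0 < r / (p-1) := div_pos hr0 hp1
  set κ := r / (p - 1) with hκdef
  set cA := ((b + 2*δ₀)^(p-1) + 1 + 2*δ₀ : ℝ) with hcA
  have hcA0 : 0 < cA := by positivity
  refine ⟨C₀ ^ κ + cA ^ κ * C₁ + 1, by positivity, ?_⟩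
  intro N hN δ ε hδ hδlt hε hε1 u v Ku Kv hu hv Ω hΩ hA
  have hN0 : (0:ℝ) < N := by
    have : (2:ℝ) ≤ N := by exact_mod_cast hN
    linarith
  set Tfin := (Finset.Icc 2 N).biUnion
      (fun i => ({Bmat p b i, -Bmat p b i, Cmat p b i, -Cmat p b i} :
        Finset (Matrix (Fin 2) (Fin 2) ℝ))) with hTfin
  set Sfin := insert (Amat p b N) (insert (-Amat p b N) Tfin) with hSfin
  have hcoe : (↑Sfin : Set (Matrix (Fin 2) (Fin 2) ℝ)) =
      {E | (∃ i : ℕ, 2 ≤ i ∧ i ≤ N ∧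
            (E = Bmat p b i ∨ E = -Bmat p b i ∨ E = Cmat p b i ∨ E = -Cmat p b i)) ∨
          E = Amat p b N ∨ E = -Amat p b N} := by
    ext E
    simp only [hSfin, hTfin, Finset.coe_insert, Set.mem_insert_iff, Finset.mem_coe,
      Finset.mem_biUnion, Finset.mem_Icc, Finset.mem_insert, Finset.mem_singleton,
      Set.mem_setOf_eq]
    constructor
    · rintro (h | h | ⟨i, ⟨h1, h2⟩, h3⟩)
      · exact Or.inr (Or.inl h)
      · exact Or.inr (Or.inr h)
      · exact Or.inl ⟨i, h1, h2, h3⟩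
    · rintro (⟨i, h1, h2, h3⟩ | h | h)
      · exact Or.inr (Or.inr ⟨i, ⟨h1, h2⟩, h3⟩)
      · exact Or.inl h
      · exact Or.inr (Or.inl h)
  obtain ⟨hmeas, hsub, hdisj, hcov, hae⟩ := hΩ _ hcoe
  have hgu : Measurable (gradient u) :=
    (LinearIsometryEquiv.continuous _).measurable.comp (measurable_fderiv ℝ u)
  have hgv : Measurable (gradient v) :=
    (LinearIsometryEquiv.continuous _).measurable.comp (measurable_fderiv ℝ v)
  have hFm : Measurable (fun x => (‖gradient u x‖ ^ (p - 2)) • gradient u x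
      - perp (gradient v x)) :=
    (((Real.continuous_rpow_const (by linarith : (0:ℝ) ≤ p - 2)).measurable.comp
      hgu.norm).smul hgu).sub (IUB.continuous_perp.measurable.comp hgv)
  have hfm : Measurable (fun x => ‖(‖gradient u x‖ ^ (p - 2)) • gradient u x
      - perp (gradient v x)‖ ^ κ) :=
    (Real.continuous_rpow_const hκ.le).measurable.comp hFm.norm
  have hXm : Measurable (fun x => ‖gradient u x‖ ^ r) :=
    (Real.continuous_rpow_const hr0.le).measurable.comp hgu.norm
  have hgub : ∀ x, ‖gradient u x‖ ≤ Ku := by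
    intro x
    have h1 : ‖gradient u x‖ = ‖fderiv ℝ u x‖ := LinearIsometryEquiv.norm_map _ _
    rw [h1]; exact norm_fderiv_le_of_lipschitz ℝ hu
  have hFb : ∀ x, ‖(‖gradient u x‖ ^ (p - 2)) • gradient u x - perp (gradient v x)‖
      ≤ (Ku:ℝ)^(p-1) + Kv := by
    intro x
    have h2 : ‖gradient u x‖^(p-1) ≤ (Ku:ℝ)^(p-1) :=
      Real.rpow_le_rpow (norm_nonneg _) (hgub x) (by linarith)
    have h4 : ‖gradient v x‖ ≤ Kv := by
      have h1 : ‖gradient v x‖ = ‖fderiv ℝ v x‖ := LinearIsometryEquiv.norm_map _ _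
      rw [h1]; exact norm_fderiv_le_of_lipschitz ℝ hv
    calc ‖(‖gradient u x‖ ^ (p - 2)) • gradient u x - perp (gradient v x)‖
        ≤ ‖(‖gradient u x‖ ^ (p - 2)) • gradient u x‖ + ‖perp (gradient v x)‖ :=
          norm_sub_le _ _
      _ = ‖gradient u x‖^(p-1) + ‖gradient v x‖ := by
          rw [IUB.norm_rpow_smul hp, IUB.norm_perp]
      _ ≤ _ := add_le_add h2 h4
  have hballfin : volume (Metric.ball (0 : EuclideanSpace ℝ (Fin 2)) 1) ≠ ⊤ :=
    measure_ball_lt_top.ne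
  have hΩfin : ∀ E ∈ Sfin, volume (Ω E) ≠ ⊤ := fun E hE =>
    ((measure_mono (hsub E (Finset.mem_coe.mpr hE))).trans_lt measure_ball_lt_top).ne
  have hint : ∀ E ∈ Sfin, IntegrableOn (fun x => ‖(‖gradient u x‖ ^ (p - 2)) • gradient u x
      - perp (gradient v x)‖ ^ κ) (Ω E) volume := by
    intro E hE
    refine Measure.integrableOn_of_bounded (hΩfin E hE) hfm.aestronglyMeasurable
      (M := ((Ku:ℝ)^(p-1) + Kv)^κ) (ae_of_all _ fun x => ?_)
    rw [Real.norm_eq_abs, abs_of_nonneg (Real.rpow_nonneg (norm_nonneg _) _)]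
    exact Real.rpow_le_rpow (norm_nonneg _) (hFb x) hκ.le
  have hintX : ∀ E ∈ Sfin, IntegrableOn (fun x => ‖gradient u x‖ ^ r) (Ω E) volume := by
    intro E hE
    refine Measure.integrableOn_of_bounded (hΩfin E hE) hXm.aestronglyMeasurable
      (M := (Ku:ℝ)^r) (ae_of_all _ fun x => ?_)
    rw [Real.norm_eq_abs, abs_of_nonneg (Real.rpow_nonneg (norm_nonneg _) _)]
    exact Real.rpow_le_rpow (norm_nonneg _) (hgub x) hr0.le
  have hpair : Set.Pairwise ↑Sfin (Function.onFun Disjoint Ω) := by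
    intro E hE E' hE' hne
    exact Set.disjoint_iff_inter_eq_empty.mpr (hdisj E hE E' hE' hne)
  have hU : Metric.ball (0 : EuclideanSpace ℝ (Fin 2)) 1 =ᵐ[volume] ⋃ E ∈ Sfin, Ω E := by
    rw [MeasureTheory.ae_eq_set]
    constructor
    · rw [← Finset.set_biUnion_coe]; exact hcov
    · have hss : (⋃ E ∈ Sfin, Ω E) ⊆ Metric.ball (0 : EuclideanSpace ℝ (Fin 2)) 1 :=
        Set.iUnion₂_subset fun E hE => hsub E (Finset.mem_coe.mpr hE)
      rw [Set.diff_eq_empty.mpr hss]; exact measure_empty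
  have hsplit : (∫ x in Metric.ball (0 : EuclideanSpace ℝ (Fin 2)) 1,
      ‖(‖gradient u x‖ ^ (p - 2)) • gradient u x - perp (gradient v x)‖ ^ κ)
      = ∑ E ∈ Sfin, ∫ x in Ω E, ‖(‖gradient u x‖ ^ (p - 2)) • gradient u x
        - perp (gradient v x)‖ ^ κ := by
    rw [setIntegral_congr_set hU]
    exact integral_biUnion_finset Sfin (fun E hE => hmeas E (Finset.mem_coe.mpr hE)) hpair
      (fun E hE => hint E hE)
  have hNp : (0:ℝ) < (N:ℝ) ^ (p-1) := Real.rpow_pos_of_pos hN0 _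
  have hAninT : Amat p b N ∉ Tfin := by
    intro hmem
    rw [hTfin, Finset.mem_biUnion] at hmem
    obtain ⟨i, hi, hmem⟩ := hmem
    rw [Finset.mem_Icc] at hi
    have hi2 : (2:ℝ) ≤ i := by exact_mod_cast hi.1
    have hBp : (0:ℝ) < b ^ (p-1) * ((i:ℝ)-1) ^ (p-1) :=
      mul_pos (Real.rpow_pos_of_pos hb _) (Real.rpow_pos_of_pos (by linarith) _)
    have hip : (0:ℝ) < (i:ℝ) ^ (p-1) := Real.rpow_pos_of_pos (by linarith) _
    obtain ⟨n1, n2, n3, n4⟩ := IUB.Amat_notin hb hN hi.1 hBp hNp hip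
    simp only [Finset.mem_insert, Finset.mem_singleton] at hmem
    rcases hmem with h|h|h|h
    exacts [n1 h, n2 h, n3 h, n4 h]
  have hnAninT : -Amat p b N ∉ Tfin := by
    intro hmem
    rw [hTfin, Finset.mem_biUnion] at hmem
    obtain ⟨i, hi, hmem⟩ := hmem
    rw [Finset.mem_Icc] at hi
    have hi2 : (2:ℝ) ≤ i := by exact_mod_cast hi.1
    have hBp : (0:ℝ) < b ^ (p-1) * ((i:ℝ)-1) ^ (p-1) :=
      mul_pos (Real.rpow_pos_of_pos hb _) (Real.rpow_pos_of_pos (by linarith) _)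
    have hip : (0:ℝ) < (i:ℝ) ^ (p-1) := Real.rpow_pos_of_pos (by linarith) _
    obtain ⟨n1, n2, n3, n4⟩ := IUB.negAmat_notin hb hN hi.1 hBp hNp hip
    simp only [Finset.mem_insert, Finset.mem_singleton] at hmem
    rcases hmem with h|h|h|h
    exacts [n1 h, n2 h, n3 h, n4 h]
  have hAne : Amat p b N ≠ -Amat p b N := IUB.Amat_ne_neg hb hN
  have hsum : ∑ E ∈ Sfin, (∫ x in Ω E, ‖(‖gradient u x‖ ^ (p - 2)) • gradient u x
        - perp (gradient v x)‖ ^ κ)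
      = (∫ x in Ω (Amat p b N), ‖(‖gradient u x‖ ^ (p - 2)) • gradient u x
          - perp (gradient v x)‖ ^ κ)
        + (∫ x in Ω (-Amat p b N), ‖(‖gradient u x‖ ^ (p - 2)) • gradient u x
          - perp (gradient v x)‖ ^ κ)
        + ∑ E ∈ Tfin, (∫ x in Ω E, ‖(‖gradient u x‖ ^ (p - 2)) • gradient u x
          - perp (gradient v x)‖ ^ κ) := by
    rw [hSfin, Finset.sum_insert (by
        rw [Finset.mem_insert]
        push_neg
        exact ⟨hAne, hAninT⟩),
      Finset.sum_insert hnAninT]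
    ring
  have hTbound : ∀ E ∈ Tfin, (∫ x in Ω E, ‖(‖gradient u x‖ ^ (p - 2)) • gradient u x
        - perp (gradient v x)‖ ^ κ)
      ≤ C₀^κ * (δ ^ r * ε ^ (-(r * (p - 2) / (p - 1))) * (volume (Ω E)).toReal +
          ε ^ κ * ∫ x in Ω E, ‖gradient u x‖ ^ r) := by
    intro E hET
    have hES : E ∈ Sfin := by
      rw [hSfin]
      exact Finset.mem_insert_of_mem (Finset.mem_insert_of_mem hET)
    have hEm : MeasurableSet (Ω E) := hmeas E (Finset.mem_coe.mpr hES)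
    rw [hTfin, Finset.mem_biUnion] at hET
    obtain ⟨i, hiIcc, hiE⟩ := hET
    rw [Finset.mem_Icc] at hiIcc
    have hEor : E = Bmat p b i ∨ E = -Bmat p b i ∨ E = Cmat p b i ∨ E = -Cmat p b i := by
      simpa only [Finset.mem_insert, Finset.mem_singleton] using hiE
    have hpt : ∀ᵐ x ∂(volume.restrict (Ω E)),
        ‖(‖gradient u x‖ ^ (p - 2)) • gradient u x - perp (gradient v x)‖ ^ κ
        ≤ C₀^κ * (δ ^ r * ε ^ (-(r * (p - 2) / (p - 1))) + ε ^ κ * ‖gradient u x‖ ^ r) := by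
      refine (ae_restrict_iff' hEm).mpr ?_
      filter_upwards [hae E (Finset.mem_coe.mpr hES)] with x hx hxΩ
      have hker := hkernel δ hδ hδlt i hiIcc.1 (Dw u v x) E hEor (hx hxΩ)
      have e1 : vec2 (Dw u v x 0 0) (Dw u v x 0 1) = gradient u x :=
        IUB.vec2_eta (gradient u x)
      have e2 : vec2 (-(Dw u v x 1 1)) (Dw u v x 1 0) = perp (gradient v x) := rfl
      rw [e1, e2] at hker
      calc ‖(‖gradient u x‖ ^ (p - 2)) • gradient u x - perp (gradient v x)‖ ^ κ
          ≤ (C₀ * δ * ‖gradient u x‖ ^ (p-2)) ^ κ :=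
            Real.rpow_le_rpow (norm_nonneg _) hker hκ.le
        _ = C₀ ^ κ * (δ * ‖gradient u x‖ ^ (p-2)) ^ κ := by
            rw [mul_assoc, Real.mul_rpow hC₀.le (by positivity)]
        _ ≤ C₀ ^ κ * (δ ^ r * ε ^ (-(r * (p - 2) / (p - 1))) + ε ^ κ * ‖gradient u x‖ ^ r) := by
            refine mul_le_mul_of_nonneg_left ?_ (Real.rpow_nonneg hC₀.le _)
            rw [hκdef]
            exact IUB.young_bound hp hr hδ.le hε (norm_nonneg _)
    have hconst : IntegrableOn (fun _ : EuclideanSpace ℝ (Fin 2) =>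
        δ ^ r * ε ^ (-(r * (p - 2) / (p - 1)))) (Ω E) volume :=
      integrableOn_const (hΩfin E hES)
    have hbdd : IntegrableOn (fun x => C₀^κ * (δ ^ r * ε ^ (-(r * (p - 2) / (p - 1))) +
        ε ^ κ * ‖gradient u x‖ ^ r)) (Ω E) volume :=
      (hconst.add ((hintX E hES).const_mul _)).const_mul _
    calc (∫ x in Ω E, ‖(‖gradient u x‖ ^ (p - 2)) • gradient u x
          - perp (gradient v x)‖ ^ κ)
        ≤ ∫ x in Ω E, C₀^κ * (δ ^ r * ε ^ (-(r * (p - 2) / (p - 1))) +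
            ε ^ κ * ‖gradient u x‖ ^ r) := integral_mono_ae (hint E hES) hbdd hpt
      _ = C₀^κ * (δ ^ r * ε ^ (-(r * (p - 2) / (p - 1))) * (volume (Ω E)).toReal +
          ε ^ κ * ∫ x in Ω E, ‖gradient u x‖ ^ r) := by
          rw [integral_const_mul, integral_add hconst ((hintX E hES).const_mul _),
            setIntegral_const, integral_const_mul, smul_eq_mul, measureReal_def]
          ring
  have hNrr : (cA * (N:ℝ)^(p-1)) ^ κ = cA^κ * (N:ℝ)^r := by
    rw [Real.mul_rpow hcA0.le (Real.rpow_nonneg hN0.le _), ← Real.rpow_mul hN0.le]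
    congr 2
    rw [hκdef]
    field_simp
  have hAbound : ∀ E, (E = Amat p b N ∨ E = -Amat p b N) →
      (∫ x in Ω E, ‖(‖gradient u x‖ ^ (p - 2)) • gradient u x - perp (gradient v x)‖ ^ κ)
      ≤ cA^κ * (N:ℝ)^r * (volume (Ω E)).toReal := by
    intro E hEA
    have hES : E ∈ Sfin := by
      rw [hSfin]
      rcases hEA with rfl|rfl
      · exact Finset.mem_insert_self _ _
      · exact Finset.mem_insert_of_mem (Finset.mem_insert_self _ _)
    have hEm : MeasurableSet (Ω E) := hmeas E (Finset.mem_coe.mpr hES)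
    have habs : |E 0 0| = b*N ∧ |E 0 1| = 0 ∧ |E 1 0| = 0 ∧ |E 1 1| = (N:ℝ)^(p-1) := by
      rcases hEA with rfl|rfl
      · refine ⟨?_, ?_, ?_, ?_⟩
        · rw [show Amat p b N 0 0 = b*(N:ℝ) from rfl, abs_of_nonneg (by positivity)]
        · rw [show Amat p b N 0 1 = (0:ℝ) from rfl, abs_zero]
        · rw [show Amat p b N 1 0 = (0:ℝ) from rfl, abs_zero]
        · rw [show Amat p b N 1 1 = (N:ℝ)^(p-1) from rfl,
            abs_of_nonneg (Real.rpow_nonneg hN0.le _)]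
      · refine ⟨?_, ?_, ?_, ?_⟩
        · rw [show (-Amat p b N) 0 0 = -(b*(N:ℝ)) from rfl, abs_neg,
            abs_of_nonneg (by positivity)]
        · rw [show (-Amat p b N) 0 1 = -(0:ℝ) from rfl, abs_neg, abs_zero]
        · rw [show (-Amat p b N) 1 0 = -(0:ℝ) from rfl, abs_neg, abs_zero]
        · rw [show (-Amat p b N) 1 1 = -((N:ℝ)^(p-1)) from rfl, abs_neg,
            abs_of_nonneg (Real.rpow_nonneg hN0.le _)]
    have hpt : ∀ᵐ x ∂(volume.restrict (Ω E)),
        ‖(‖gradient u x‖ ^ (p - 2)) • gradient u x - perp (gradient v x)‖ ^ κ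
        ≤ cA^κ * (N:ℝ)^r := by
      refine (ae_restrict_iff' hEm).mpr ?_
      filter_upwards [hae E (Finset.mem_coe.mpr hES)] with x hx hxΩ
      have hker := IUB.pointwise_A_bound hp hb hδ₀ hN hδlt habs.1 habs.2.1 habs.2.2.1
        habs.2.2.2 (hx hxΩ)
      have e1 : vec2 (Dw u v x 0 0) (Dw u v x 0 1) = gradient u x :=
        IUB.vec2_eta (gradient u x)
      have e2 : vec2 (-(Dw u v x 1 1)) (Dw u v x 1 0) = perp (gradient v x) := rfl
      rw [e1, e2] at hker
      rw [← hNrr]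
      exact Real.rpow_le_rpow (norm_nonneg _) hker hκ.le
    calc (∫ x in Ω E, ‖(‖gradient u x‖ ^ (p - 2)) • gradient u x
          - perp (gradient v x)‖ ^ κ)
        ≤ ∫ _x in Ω E, cA^κ * (N:ℝ)^r := integral_mono_ae (hint E hES)
            (integrableOn_const (hΩfin E hES)) hpt
      _ = cA^κ * (N:ℝ)^r * (volume (Ω E)).toReal := by
          rw [setIntegral_const, smul_eq_mul, measureReal_def]
          ring
  have hTsum : ∑ E ∈ Tfin, (∫ x in Ω E, ‖(‖gradient u x‖ ^ (p - 2)) • gradient u x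
        - perp (gradient v x)‖ ^ κ)
      ≤ C₀^κ * ∑ E ∈ Tfin, (δ ^ r * ε ^ (-(r * (p - 2) / (p - 1))) * (volume (Ω E)).toReal +
          ε ^ κ * ∫ x in Ω E, ‖gradient u x‖ ^ r) := by
    rw [Finset.mul_sum]
    exact Finset.sum_le_sum hTbound
  have hS0 : 0 ≤ ∑ E ∈ Tfin, (δ ^ r * ε ^ (-(r * (p - 2) / (p - 1))) * (volume (Ω E)).toReal +
      ε ^ κ * ∫ x in Ω E, ‖gradient u x‖ ^ r) := by
    refine Finset.sum_nonneg fun E hE => ?_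
    have h1 : (0:ℝ) ≤ ∫ x in Ω E, ‖gradient u x‖ ^ r :=
      integral_nonneg fun x => Real.rpow_nonneg (norm_nonneg _) _
    have h2 : (0:ℝ) ≤ δ ^ r * ε ^ (-(r * (p - 2) / (p - 1))) * (volume (Ω E)).toReal := by
      positivity
    have h3 : (0:ℝ) ≤ ε ^ κ := Real.rpow_nonneg hε.le _
    nlinarith
  have hNrq : (N:ℝ)^r * ((N:ℝ))^(-qbar) = (N:ℝ)^(r-qbar) := by
    rw [← Real.rpow_add hN0]
    ring_nf
  have hAsum : (∫ x in Ω (Amat p b N), ‖(‖gradient u x‖ ^ (p - 2)) • gradient u x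
        - perp (gradient v x)‖ ^ κ)
      + (∫ x in Ω (-Amat p b N), ‖(‖gradient u x‖ ^ (p - 2)) • gradient u x
        - perp (gradient v x)‖ ^ κ)
      ≤ cA^κ * C₁ * (N:ℝ)^(r - qbar) := by
    have h1 := hAbound _ (Or.inl rfl)
    have h2 := hAbound _ (Or.inr rfl)
    have h3 : cA^κ * (N:ℝ)^r * ((volume (Ω (Amat p b N))).toReal +
        (volume (Ω (-Amat p b N))).toReal) ≤ cA^κ * (N:ℝ)^r * (C₁ * (N:ℝ)^(-qbar)) :=
      mul_le_mul_of_nonneg_left hA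
        (mul_nonneg (Real.rpow_nonneg hcA0.le _) (Real.rpow_nonneg hN0.le _))
    have h4 : cA^κ * (N:ℝ)^r * (C₁ * (N:ℝ)^(-qbar)) = cA^κ * C₁ * (N:ℝ)^(r-qbar) := by
      rw [← hNrq]
      ring
    linarith
  have hNq0 : 0 ≤ (N:ℝ)^(r - qbar) := Real.rpow_nonneg hN0.le _
  have hC0κ : (0:ℝ) ≤ C₀^κ := Real.rpow_nonneg hC₀.le _
  have hcAκ : (0:ℝ) ≤ cA^κ * C₁ := mul_nonneg (Real.rpow_nonneg hcA0.le _) hC₁.le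
  rw [hsplit, hsum]
  nlinarith [hTsum, hAsum, hS0, hNq0, hC0κ, hcAκ]
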